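/- Let q be a positive integer, c a positive integer, and x_0, ..., x_{λ-1} positive integers with λ ≥ 1. Then [q+c, x_0, ..., x_{λ-1}, q]* = c·[x_0, ..., x_{λ-1}] − [x_0, ..., x_{λ-2}] + [x_1, ..., x_{λ-1}], and this quantity is positive. -/
import Mathlib


/-- The continuant of a finite sequence of integers. -/
def cont : List ℤ → ℤ
  | [] => 1
  | [a] => a
  | a :: b :: l => a * cont (b :: l) + cont l


/-- The anticontinuant `[q₀,…,q_{s-1}]* = [q₀,…,q_{s-2}] − [q₁,…,q_{s-1}]`. -/
def anticont (l : List ℤ) : ℤ := cont l.dropLast - cont l.tail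

lemma cont_two (a b : ℤ) (l : List ℤ) :
    cont (a :: b :: l) = a * cont (b :: l) + cont l := rfl

lemma cont_pos : ∀ l : List ℤ, (∀ a ∈ l, 0 < a) → 0 < cont l
  | [], _ => by simp [cont]
  | [a], h => by simpa [cont] using h a (by simp)
  | a :: b :: t, h => by
      have h1 := cont_pos (b :: t) (fun x hx => h x (List.mem_cons_of_mem a hx))
      have h2 := cont_pos t (fun x hx => h x (by simp [hx]))
      have ha := h a (by simp)
      rw [cont_two]
      nlinarith

lemma cont_cons (a : ℤ) (l : List ℤ) (h : l ≠ []) :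
    cont (a :: l) = a * cont l + cont l.tail := by
  match l with
  | [] => simp at h
  | b :: t => simp [cont]

lemma cont_concat : ∀ (l : List ℤ) (a : ℤ), l ≠ [] →
    cont (l ++ [a]) = a * cont l + cont l.dropLast
  | [b], a, _ => by simp [cont]; ring
  | [b, c], a, _ => by simp [cont]; ring
  | b :: c :: d :: t, a, _ => by
      have h1 := cont_concat (c :: d :: t) a (by simp)
      have h2 := cont_concat (d :: t) a (by simp)
      have e1 : (b :: c :: d :: t).dropLast = b :: c :: (d :: t).dropLast := by simp
      have e2 : (c :: d :: t).dropLast = c :: (d :: t).dropLast := by simp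
      rw [e2] at h1
      rw [e1]
      simp only [List.cons_append] at h1 h2 ⊢
      rw [cont_two b c (d :: (t ++ [a])), cont_two b c ((d :: t).dropLast),
          cont_two b c (d :: t)]
      linear_combination b * h1 + h2

/-- `[q+c, x₀,…,x_{λ-1}, q]* = c·[x₀,…,x_{λ-1}] − [x₀,…,x_{λ-2}] + [x₁,…,x_{λ-1}]`,
and this quantity is positive. -/
theorem anticont_expansion (q c : ℤ) (hq : 0 < q) (hc : 0 < c)
    (x : List ℤ) (hx : x ≠ []) (hxpos : ∀ a ∈ x, 0 < a) :
    anticont ((q + c) :: (x ++ [q])) = c * cont x - cont x.dropLast + cont x.tail ∧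
      0 < anticont ((q + c) :: (x ++ [q])) := by
  have hd : ((q + c) :: (x ++ [q])).dropLast = (q + c) :: x := by
    rw [show (q + c) :: (x ++ [q]) = ((q + c) :: x) ++ [q] by simp,
        List.dropLast_concat]
  have key : anticont ((q + c) :: (x ++ [q])) =
      c * cont x - cont x.dropLast + cont x.tail := by
    unfold anticont
    rw [hd, List.tail_cons, cont_cons _ x hx, cont_concat x q hx]
    ring
  refine ⟨key, ?_⟩
  rw [key]
  have hcx : 0 < cont x := cont_pos x hxpos
  have htail : 0 < cont x.tail :=
    cont_pos _ (fun a ha => hxpos a (List.mem_of_mem_tail ha))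
  have hdrop : cont x.dropLast ≤ cont x := by
    rcases List.eq_nil_or_concat x with rfl | ⟨y, a, rfl⟩
    · simp at hx
    · simp only [List.concat_eq_append] at *
      rcases eq_or_ne y [] with rfl | hy
      · have := hxpos a (by simp)
        simp [cont]; omega
      · rw [cont_concat y a hy, List.dropLast_concat]
        have h1 : 0 < cont y :=
          cont_pos y (fun b hb => hxpos b (by simp [hb]))
        have h2 : 0 < cont y.dropLast :=
          cont_pos _ (fun b hb => hxpos b (by
            simp [(List.dropLast_sublist y).mem hb]))
        have ha : 1 ≤ a := hxpos a (by simp)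
        nlinarith
  nlinarith
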